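/- arXiv:1010.2933 — 4 statements merged into one kernel-verified Lean document; each statement's English description precedes it below -/
import Mathlib

section
/- Let k ∈ ℂ and set k₁ = (1-k)/(1+k) (with k ≠ -1). If (x, w) ∈ ℂ² satisfies w² = (1-x²)(1-k²x²) and w ≠ 0, then the pair (λ, μ) = (i(1+k)·x/w, (k²x⁴ - 1)/w²) satisfies μ² = (1-λ²)(1-k₁²λ²). -/
open Complex in
/-- The map φ(x,w) = (i(1+k)x/w, (k²x⁴-1)/w²) sends the curve
    w² = (1-x²)(1-k²x²) to the curve μ² = (1-λ²)(1-k₁²λ²) with k₁ = (1-k)/(1+k). -/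
theorem map_between_curves (k x w : ℂ) (hk : k ≠ -1) (hw : w ≠ 0)
    (hcurve : w ^ 2 = (1 - x ^ 2) * (1 - k ^ 2 * x ^ 2)) :
    ((k ^ 2 * x ^ 4 - 1) / w ^ 2) ^ 2 =
      (1 - (I * (1 + k) * x / w) ^ 2) *
        (1 - ((1 - k) / (1 + k)) ^ 2 * (I * (1 + k) * x / w) ^ 2) := by
  have hk1 : (1 : ℂ) + k ≠ 0 := fun h => hk (by linear_combination h)
  have hI : (I : ℂ) ^ 2 = -1 := I_sq
  have key : (k^2*x^4-1)^2 = w^4 + (2+2*k^2)*x^2*w^2 + (1-k^2)^2*x^4 := by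
    linear_combination (-(w^2 + (2+2*k^2)*x^2 + (1-x^2)*(1-k^2*x^2))) * hcurve
  set_option maxHeartbeats 1000000 in
  field_simp
  linear_combination key +
    ((2+2*k^2)*x^2*w^2 + (1-I^2)*(1-k^2)^2*x^4) * hI
end

section
/- Let k ∈ ℂ, k ≠ -1, and φ(x,w) = (λ(x,w), μ(x,w)) = (i(1+k)x/w, (k²x⁴-1)/w²) on the curve w² = (1-x²)(1-k²x²). Then the pullback of the differential dλ/μ equals -i(1+k)·dx/w; explicitly, for a differentiable path t ↦ (x(t), w(t)) on the curve with w(t) ≠ 0 and μ(x(t),w(t)) ≠ 0, one has (d/dt λ(x(t),w(t)))/μ(x(t),w(t)) = -i(1+k)·x'(t)/w(t). -/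
open Complex in
/-- Pullback of the differential dλ/μ under φ(x,w) = (i(1+k)x/w, (k²x⁴-1)/w²)
    equals -i(1+k) dx/w: along a differentiable path on the curve
    w² = (1-x²)(1-k²x²), the derivative of λ(x(t),w(t)) equals
    μ(x(t),w(t)) · (-i(1+k) x'(t)/w(t)). -/
theorem pullback_of_differential (k : ℂ) (hk : k ≠ -1)
    (x w dx dw : ℂ → ℂ)
    (hx : ∀ t : ℂ, HasDerivAt x (dx t) t)
    (hw : ∀ t : ℂ, HasDerivAt w (dw t) t)
    (hcurve : ∀ t : ℂ, (w t) ^ 2 = (1 - (x t) ^ 2) * (1 - k ^ 2 * (x t) ^ 2))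
    (hwne : ∀ t : ℂ, w t ≠ 0)
    (hmune : ∀ t : ℂ, (k ^ 2 * (x t) ^ 4 - 1) / (w t) ^ 2 ≠ 0) :
    ∀ t : ℂ,
      HasDerivAt (fun s => I * (1 + k) * x s / w s)
        ((k ^ 2 * (x t) ^ 4 - 1) / (w t) ^ 2 * (-(I * (1 + k)) * dx t / w t)) t := by
  intro t
  -- derivative of both sides of the curve equation
  have h1 : HasDerivAt (fun s => (w s) ^ 2) (2 * w t ^ 1 * dw t) t := by
    exact ((hw t).pow 2).congr_deriv (by simp)
  have h2 : HasDerivAt (fun s => (1 - (x s) ^ 2) * (1 - k ^ 2 * (x s) ^ 2))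
      ((-(2 * x t ^ 1 * dx t)) * (1 - k ^ 2 * (x t) ^ 2)
        + (1 - (x t) ^ 2) * (-(k ^ 2 * (2 * x t ^ 1 * dx t)))) t := by
    have ha : HasDerivAt (fun s => 1 - (x s) ^ 2) (-(2 * x t ^ 1 * dx t)) t := by
      exact ((hasDerivAt_const t (1:ℂ)).sub ((hx t).pow 2)).congr_deriv (by simp)
    have hb : HasDerivAt (fun s => 1 - k ^ 2 * (x s) ^ 2)
        (-(k ^ 2 * (2 * x t ^ 1 * dx t))) t := by
      exact ((hasDerivAt_const t (1:ℂ)).sub (((hx t).pow 2).const_mul (k ^ 2))).congr_deriv (by simp)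
    exact (ha.mul hb).congr_deriv (by simp)
  have h1' : HasDerivAt (fun s => (w s) ^ 2)
      ((-(2 * x t ^ 1 * dx t)) * (1 - k ^ 2 * (x t) ^ 2)
        + (1 - (x t) ^ 2) * (-(k ^ 2 * (2 * x t ^ 1 * dx t)))) t := by
    have : (fun s => (w s) ^ 2) = fun s => (1 - (x s) ^ 2) * (1 - k ^ 2 * (x s) ^ 2) :=
      funext hcurve
    rw [this]; exact h2
  have hrel : 2 * w t ^ 1 * dw t
      = (-(2 * x t ^ 1 * dx t)) * (1 - k ^ 2 * (x t) ^ 2)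
        + (1 - (x t) ^ 2) * (-(k ^ 2 * (2 * x t ^ 1 * dx t))) := h1.unique h1'
  have hd : HasDerivAt (fun s => I * (1 + k) * x s / w s)
      ((I * (1 + k) * dx t * w t - I * (1 + k) * x t * dw t) / (w t) ^ 2) t :=
    ((hx t).const_mul (I * (1 + k))).div (hw t) (hwne t)
  convert hd using 1
  have hw2 := hwne t
  field_simp
  linear_combination (exp := 1) (-((1 + k) * dx t)) * hcurve t + ((1 + k) * x t / 2) * hrel
end

section
/- Let 𝕂, 𝕂' denote complete elliptic integrals with modulus k and 𝕂₁, 𝕂₁' those with modulus k₁ = (1-k)/(1+k), for 0 < k < 1. Then 𝕂 = 𝕂₁'/(i(1+k)) interpreted as follows: ∫₀¹ dx/√((1-x²)(1-k²x²)) = (1/(1+k))·∫₁^{1/k₁} dλ/√((λ²-1)(1-k₁²λ²)) — i.e., the real complete integral of modulus k equals 1/(1+k) times the complementary complete integral of modulus k₁. -/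
open MeasureTheory Set Real

/-- Landen-type transformation of complete elliptic integrals: for 0 < k < 1
    and k₁ = (1-k)/(1+k),
    ∫₀¹ dx/√((1-x²)(1-k²x²)) = (1/(1+k)) ∫₁^{1/k₁} dλ/√((λ²-1)(1-k₁²λ²)),
    i.e. 𝕂(k) = 𝕂'(k₁)/(1+k). -/
theorem landen_transformation (k : ℝ) (hk0 : 0 < k) (hk1 : k < 1) :
    ∫ x in (0:ℝ)..1, 1 / Real.sqrt ((1 - x ^ 2) * (1 - k ^ 2 * x ^ 2)) =
      (1 / (1 + k)) *
        ∫ lam in (1:ℝ)..(1 / ((1 - k) / (1 + k))),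
          1 / Real.sqrt ((lam ^ 2 - 1) *
            (1 - ((1 - k) / (1 + k)) ^ 2 * lam ^ 2)) := by
  have h1k : (0:ℝ) < 1 + k := by linarith
  have h1k' : (0:ℝ) < 1 - k := by linarith
  have hR : (1:ℝ) / ((1 - k) / (1 + k)) = (1 + k) / (1 - k) := by
    rw [one_div_div]
  -- the common integrand
  set g : ℝ → ℝ := fun u => 1 / Real.sqrt (u * ((1 - u) * (1 - k ^ 2 * u))) with hg
  -- positivity of the cubic on (0,1)
  have hP : ∀ u ∈ Ioo (0:ℝ) 1, 0 < u * ((1 - u) * (1 - k ^ 2 * u)) := by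
    intro u hu
    have h1 : 0 < 1 - u := by linarith [hu.2]
    have h2 : 0 < 1 - k ^ 2 * u := by nlinarith [hu.1, hu.2, sq_nonneg k]
    have := hu.1
    positivity
  -- Step 1: LHS = (1/2) ∫_{(0,1)} g
  have hL : (∫ x in (0:ℝ)..1, 1 / Real.sqrt ((1 - x ^ 2) * (1 - k ^ 2 * x ^ 2)))
      = (1 / 2) * ∫ u in Ioo (0:ℝ) 1, g u := by
    rw [intervalIntegral.integral_of_le zero_le_one, integral_Ioc_eq_integral_Ioo]
    have himg : Real.sqrt '' Ioo (0:ℝ) 1 = Ioo (0:ℝ) 1 := by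
      ext y
      constructor
      · rintro ⟨u, hu, rfl⟩
        exact ⟨Real.sqrt_pos.mpr hu.1, by simpa using Real.sqrt_lt_sqrt hu.1.le hu.2⟩
      · intro hy
        exact ⟨y ^ 2, ⟨pow_pos hy.1 2, by nlinarith [hy.1, hy.2]⟩, Real.sqrt_sq hy.1.le⟩
    have hderiv : ∀ u ∈ Ioo (0:ℝ) 1,
        HasDerivWithinAt Real.sqrt (1 / (2 * Real.sqrt u)) (Ioo (0:ℝ) 1) u :=
      fun u hu => (Real.hasDerivAt_sqrt hu.1.ne').hasDerivWithinAt
    have hinj : InjOn Real.sqrt (Ioo (0:ℝ) 1) := by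
      intro a ha b hb hab
      have := congrArg (fun t => t ^ 2) hab
      simpa [Real.sq_sqrt ha.1.le, Real.sq_sqrt hb.1.le] using this
    rw [← himg, integral_image_eq_integral_abs_deriv_smul measurableSet_Ioo hderiv hinj, himg]
    rw [show (1:ℝ)/2 * ∫ u in Ioo (0:ℝ) 1, g u = ∫ u in Ioo (0:ℝ) 1, (1/2) * g u from
      (integral_const_mul _ _).symm]
    apply setIntegral_congr_fun measurableSet_Ioo
    intro u hu
    have hsu : 0 < Real.sqrt u := Real.sqrt_pos.mpr hu.1
    have h1 : 0 < 1 - u := by linarith [hu.2]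
    have h2 : 0 < 1 - k ^ 2 * u := by nlinarith [hu.1, hu.2, sq_nonneg k]
    have hrest : 0 < Real.sqrt ((1 - u) * (1 - k ^ 2 * u)) := Real.sqrt_pos.mpr (by positivity)
    simp only [smul_eq_mul, Real.sq_sqrt hu.1.le, hg]
    rw [abs_of_pos (by positivity), Real.sqrt_mul hu.1.le]
    field_simp
  -- Step 2: the lam-integral = ((1+k)/2) ∫_{(0,1)} g
  set φ : ℝ → ℝ := fun u => (1 + k * u) / (1 - k * u) with hφ
  have hden : ∀ u ∈ Ioo (0:ℝ) 1, 0 < 1 - k * u := by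
    intro u hu; nlinarith [hu.1, hu.2]
  have hRint : (∫ lam in (1:ℝ)..((1 + k) / (1 - k)),
        1 / Real.sqrt ((lam ^ 2 - 1) * (1 - ((1 - k) / (1 + k)) ^ 2 * lam ^ 2)))
      = ((1 + k) / 2) * ∫ u in Ioo (0:ℝ) 1, g u := by
    have hle : (1:ℝ) ≤ (1 + k) / (1 - k) := by
      rw [le_div_iff₀ h1k']; linarith
    rw [intervalIntegral.integral_of_le hle, integral_Ioc_eq_integral_Ioo]
    have himg : φ '' Ioo (0:ℝ) 1 = Ioo (1:ℝ) ((1 + k) / (1 - k)) := by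
      ext y
      constructor
      · rintro ⟨u, hu, rfl⟩
        have hd := hden u hu
        constructor
        · rw [hφ, lt_div_iff₀ hd]; nlinarith [hu.1]
        · rw [hφ, div_lt_div_iff₀ hd h1k']; nlinarith [hu.2]
      · rintro ⟨hy1, hy2⟩
        have hy2' : y * (1 - k) < 1 + k := (lt_div_iff₀ h1k').mp hy2
        have hyp : (0:ℝ) < y + 1 := by linarith
        refine ⟨(y - 1) / (k * (y + 1)), ⟨div_pos (by linarith) (by positivity), ?_⟩, ?_⟩
        · rw [div_lt_one (by positivity)]; nlinarith
        · have hku : k * ((y - 1) / (k * (y + 1))) = (y - 1) / (y + 1) := by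
            field_simp
          show (1 + k * ((y - 1) / (k * (y + 1)))) / (1 - k * ((y - 1) / (k * (y + 1)))) = y
          rw [hku]
          have hd2 : 1 - (y - 1) / (y + 1) = 2 / (y + 1) := by field_simp; ring
          have hn2 : 1 + (y - 1) / (y + 1) = 2 * y / (y + 1) := by field_simp; ring
          rw [hd2, hn2]
          field_simp
    have hderiv : ∀ u ∈ Ioo (0:ℝ) 1,
        HasDerivWithinAt φ (2 * k / (1 - k * u) ^ 2) (Ioo (0:ℝ) 1) u := by
      intro u hu
      have hd := hden u hu
      have h1 : HasDerivAt (fun u : ℝ => 1 + k * u) k u := by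
        simpa using ((hasDerivAt_id u).const_mul k).const_add 1
      have h2 : HasDerivAt (fun u : ℝ => 1 - k * u) (-k) u := by
        simpa using ((hasDerivAt_id u).const_mul k).const_sub 1
      have h3 := h1.div h2 hd.ne'
      have : (k * (1 - k * u) - (1 + k * u) * (-k)) / (1 - k * u) ^ 2
          = 2 * k / (1 - k * u) ^ 2 := by field_simp; ring
      rw [this] at h3
      exact h3.hasDerivWithinAt
    have hinj : InjOn φ (Ioo (0:ℝ) 1) := by
      intro a ha b hb hab
      have hda := hden a ha
      have hdb := hden b hb
      rw [hφ, div_eq_div_iff hda.ne' hdb.ne'] at hab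
      have h4 : 2 * k * (a - b) = 0 := by linear_combination hab
      have h5 : a - b = 0 := by
        rcases mul_eq_zero.mp h4 with h | h
        · exfalso; nlinarith
        · exact h
      linarith
    rw [← himg, integral_image_eq_integral_abs_deriv_smul measurableSet_Ioo hderiv hinj]
    rw [show ((1:ℝ)+k)/2 * ∫ u in Ioo (0:ℝ) 1, g u = ∫ u in Ioo (0:ℝ) 1, ((1+k)/2) * g u from
      (integral_const_mul _ _).symm]
    apply setIntegral_congr_fun measurableSet_Ioo
    intro u hu
    have hd := hden u hu
    have hPu := hP u hu
    have ht : 0 < Real.sqrt (u * ((1 - u) * (1 - k ^ 2 * u))) := Real.sqrt_pos.mpr hPu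
    have hkey : ((φ u) ^ 2 - 1) * (1 - ((1 - k) / (1 + k)) ^ 2 * (φ u) ^ 2)
        = (4 * k / ((1 + k) * (1 - k * u) ^ 2)) ^ 2 * (u * ((1 - u) * (1 - k ^ 2 * u))) := by
      rw [hφ]
      field_simp
      ring
    have hc : (0:ℝ) < 4 * k / ((1 + k) * (1 - k * u) ^ 2) := by positivity
    simp only [smul_eq_mul, hg]
    rw [hkey, Real.sqrt_mul (sq_nonneg _), Real.sqrt_sq hc.le,
      abs_of_pos (show (0:ℝ) < 2 * k / (1 - k * u) ^ 2 by positivity)]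
    field_simp
    ring
  rw [hL, hR, hRint]
  field_simp
end

section
/- Suppose G̃₊ and G̃₋ are differentiable matrix-valued functions of t (with values in invertible n×n matrices of functions of λ) satisfying dG̃₊/dt = (L⁺ₜ + A₀)G̃₊ and dG̃₋/dt = G̃₋(L⁻ₜ - A₀), with G̃₊|₀ = G̃₋|₀ = I, where Lₜ = L⁻ₜ + L⁺ₜ satisfies the Lax equation dLₜ/dt = [L⁺ₜ + A₀, Lₜ] and Lₜ = G̃₋⁻¹L₀G̃₋. Then G := G̃₋G̃₊ satisfies dG/dt = L₀G and G|₀ = I, hence G = exp(tL₀). -/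
/-- If G̃₊ and G̃₋ satisfy dG̃₊/dt = (Lₜ⁺ + A₀)G̃₊, dG̃₋/dt = G̃₋(Lₜ⁻ - A₀),
    with G̃₊(0) = G̃₋(0) = 1, Lₜ = Lₜ⁻ + Lₜ⁺ and G̃₋ Lₜ = L₀ G̃₋, then
    G = G̃₋G̃₊ satisfies dG/dt = L₀ G, G(0) = 1, hence G = exp(tL₀). -/
theorem G_equals_exp {A : Type*} [NormedRing A] [NormedAlgebra ℂ A]
    [CompleteSpace A]
    (L Lplus Lminus A₀ Gp Gm : ℂ → A) (L₀ : A)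
    (hsplit : ∀ t : ℂ, L t = Lminus t + Lplus t)
    (hGp : ∀ t : ℂ, HasDerivAt Gp ((Lplus t + A₀ t) * Gp t) t)
    (hGm : ∀ t : ℂ, HasDerivAt Gm (Gm t * (Lminus t - A₀ t)) t)
    (hconj : ∀ t : ℂ, Gm t * L t = L₀ * Gm t)
    (hGp0 : Gp 0 = 1) (hGm0 : Gm 0 = 1) :
    (∀ t : ℂ, HasDerivAt (fun s => Gm s * Gp s) (L₀ * (Gm t * Gp t)) t) ∧
    Gm 0 * Gp 0 = 1 ∧
    (∀ t : ℂ, Gm t * Gp t = NormedSpace.exp (t • L₀)) := by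
  have hG : ∀ t : ℂ, HasDerivAt (fun s => Gm s * Gp s) (L₀ * (Gm t * Gp t)) t := by
    intro t
    have h := (hGm t).mul (hGp t)
    have key : Gm t * (Lminus t - A₀ t) * Gp t + Gm t * ((Lplus t + A₀ t) * Gp t)
        = L₀ * (Gm t * Gp t) := by
      have h2 : Gm t * L t * Gp t = L₀ * (Gm t * Gp t) := by rw [hconj t, mul_assoc]
      rw [← h2, hsplit t]
      noncomm_ring
    rwa [key] at h
  refine ⟨hG, by rw [hGp0, hGm0, mul_one], ?_⟩
  set h : ℂ → A := fun t => NormedSpace.exp (t • (-L₀)) * (Gm t * Gp t) with hh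
  have hderiv : ∀ t : ℂ, HasDerivAt h 0 t := by
    intro t
    have h1 := (hasDerivAt_exp_smul_const (𝕂 := ℂ) (-L₀) t).mul (hG t)
    convert h1 using 1
    · rfl
    · simp [mul_assoc, neg_mul, mul_neg]
  have hconst : ∀ t : ℂ, h t = 1 := by
    intro t
    have := is_const_of_deriv_eq_zero (𝕜 := ℂ) (f := h)
      (fun x => (hderiv x).differentiableAt)
      (fun x => (hderiv x).deriv) t 0
    simpa [hh, hGp0, hGm0] using this
  intro t
  have hcomm : Commute (t • L₀) (t • (-L₀)) := by
    exact ((Commute.refl L₀).neg_right.smul_right t).smul_left t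
  have hmul : NormedSpace.exp (t • L₀) * NormedSpace.exp (t • (-L₀)) = 1 := by
    let +nondep : NormedAlgebra ℚ A := .restrictScalars ℚ ℂ A
    rw [← NormedSpace.exp_add_of_commute hcomm]
    simp
  calc Gm t * Gp t = NormedSpace.exp (t • L₀) * NormedSpace.exp (t • (-L₀))
        * (Gm t * Gp t) := by rw [hmul, one_mul]
    _ = NormedSpace.exp (t • L₀) * h t := by rw [hh, mul_assoc]
    _ = NormedSpace.exp (t • L₀) := by rw [hconst t, mul_one]
end
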